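/- Let d ≥ 1, L > 0, t > 0, and let f : ℝ^d → ℝ be convex and L-smooth, i.e. f is differentiable and ‖∇f(x) − ∇f(y)‖ ≤ L‖x − y‖ for all x, y ∈ ℝ^d. Then the smoothed function f_t is differentiable and for every x ∈ ℝ^d one has ‖∇f_t(x)‖² ≥ (1/2)‖∇f(x)‖² − L²·t². -/

import Mathlib

open MeasureTheory

/-- The smoothed function `f_t(x) = 𝔼_r [f (x + t r)]`, where `r` is uniform on the closed
unit ball of `ℝ^d`. -/
noncomputable def smoothedFn {d : ℕ} (t : ℝ) (f : EuclideanSpace ℝ (Fin d) → ℝ)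
    (x : EuclideanSpace ℝ (Fin d)) : ℝ :=
  ⨍ r in Metric.closedBall (0 : EuclideanSpace ℝ (Fin d)) 1, f (x + t • r)

set_option maxHeartbeats 1000000 in
theorem smoothed_grad_norm_lower_bound {d : ℕ} (hd : 1 ≤ d) (L t : ℝ) (hL : 0 < L) (ht : 0 < t)
    (f : EuclideanSpace ℝ (Fin d) → ℝ)
    (hconv : ConvexOn ℝ Set.univ f)
    (hdiff : Differentiable ℝ f)
    (hsmooth : ∀ x y : EuclideanSpace ℝ (Fin d),
      ‖gradient f x - gradient f y‖ ≤ L * ‖x - y‖) :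
    Differentiable ℝ (smoothedFn t f) ∧
      ∀ x : EuclideanSpace ℝ (Fin d),
        1 / 2 * ‖gradient f x‖ ^ 2 - L ^ 2 * t ^ 2 ≤ ‖gradient (smoothedFn t f) x‖ ^ 2 := by
  classical
  set B : Set (EuclideanSpace ℝ (Fin d)) := Metric.closedBall (0 : (EuclideanSpace ℝ (Fin d))) 1 with hBdef
  have hBc : IsCompact B := isCompact_closedBall _ _
  have hμB_fin : volume B < ⊤ := hBc.measure_lt_top
  have hμB_pos : 0 < volume B :=
    Metric.measure_closedBall_pos volume (0 : (EuclideanSpace ℝ (Fin d))) one_pos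
  set c : ℝ := ((volume B).toReal)⁻¹ with hcdef
  have htoReal_pos : 0 < (volume B).toReal :=
    ENNReal.toReal_pos hμB_pos.ne' hμB_fin.ne
  have hc_pos : 0 < c := inv_pos.mpr htoReal_pos
  have hc_mul : c * (volume B).toReal = 1 := inv_mul_cancel₀ htoReal_pos.ne'
  -- norm of difference of fderivs equals norm of difference of gradients
  have hfd_norm : ∀ a b : (EuclideanSpace ℝ (Fin d)), ‖fderiv ℝ f a - fderiv ℝ f b‖ = ‖gradient f a - gradient f b‖ := by
    intro a b
    have h1 : fderiv ℝ f a = InnerProductSpace.toDual ℝ (EuclideanSpace ℝ (Fin d)) (gradient f a) :=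
      ((InnerProductSpace.toDual ℝ (EuclideanSpace ℝ (Fin d))).apply_symm_apply (fderiv ℝ f a)).symm
    have h2 : fderiv ℝ f b = InnerProductSpace.toDual ℝ (EuclideanSpace ℝ (Fin d)) (gradient f b) :=
      ((InnerProductSpace.toDual ℝ (EuclideanSpace ℝ (Fin d))).apply_symm_apply (fderiv ℝ f b)).symm
    rw [h1, h2, ← map_sub, LinearIsometryEquiv.norm_map]
  have hfd_lip : ∀ a b : (EuclideanSpace ℝ (Fin d)), ‖fderiv ℝ f a - fderiv ℝ f b‖ ≤ L * ‖a - b‖ := by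
    intro a b; rw [hfd_norm]; exact hsmooth a b
  have hgrad_cont : Continuous (gradient f) := by
    have : LipschitzWith (Real.toNNReal L) (gradient f) := by
      apply LipschitzWith.of_dist_le_mul
      intro a b
      rw [dist_eq_norm, dist_eq_norm, Real.coe_toNNReal _ hL.le]
      exact hsmooth a b
    exact this.continuous
  have hfd_cont : Continuous (fun y => fderiv ℝ f y) := by
    have : (fun y => fderiv ℝ f y)
        = fun y => InnerProductSpace.toDual ℝ (EuclideanSpace ℝ (Fin d)) (gradient f y) := by
      funext y
      exact ((InnerProductSpace.toDual ℝ (EuclideanSpace ℝ (Fin d))).apply_symm_apply (fderiv ℝ f y)).symm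
    rw [this]
    exact (InnerProductSpace.toDual ℝ (EuclideanSpace ℝ (Fin d))).continuous.comp hgrad_cont
  have hf_cont : Continuous f := hdiff.continuous
  -- differentiation under the integral sign
  have key : ∀ x₀ : (EuclideanSpace ℝ (Fin d)), HasFDerivAt (fun x => ∫ r in B, f (x + t • r))
      (∫ r in B, fderiv ℝ f (x₀ + t • r)) x₀ := by
    intro x₀
    have haux : ∀ (x : (EuclideanSpace ℝ (Fin d))), Continuous (fun r : (EuclideanSpace ℝ (Fin d)) => f (x + t • r)) :=
      fun x => hf_cont.comp (continuous_const.add (continuous_id.const_smul t))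
    have haux' : Continuous (fun r : (EuclideanSpace ℝ (Fin d)) => fderiv ℝ f (x₀ + t • r)) :=
      hfd_cont.comp (continuous_const.add (continuous_id.const_smul t))
    refine hasFDerivAt_integral_of_dominated_of_fderiv_le
      (F' := fun (x : (EuclideanSpace ℝ (Fin d))) (r : (EuclideanSpace ℝ (Fin d))) => fderiv ℝ f (x + t • r))
      (bound := fun _ => ‖fderiv ℝ f x₀‖ + L * (1 + t)) (Metric.ball_mem_nhds x₀ one_pos) ?_ ?_ ?_ ?_ ?_ ?_
    · exact Filter.Eventually.of_forall fun x => (haux x).aestronglyMeasurable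
    · exact (haux x₀).continuousOn.integrableOn_compact hBc
    · exact haux'.aestronglyMeasurable
    · have hmem : ∀ᵐ (a : EuclideanSpace ℝ (Fin d)) ∂(volume.restrict B), a ∈ B :=
        ae_restrict_mem hBc.measurableSet
      filter_upwards [hmem] with r hr
      intro x hx
      have hrn : ‖r‖ ≤ 1 := by simpa [hBdef] using hr
      have h1 : ‖fderiv ℝ f (x + t • r) - fderiv ℝ f x₀‖ ≤ L * ‖x + t • r - x₀‖ :=
        hfd_lip _ _
      have h2 : ‖x + t • r - x₀‖ ≤ 1 + t := by
        have : x + t • r - x₀ = (x - x₀) + t • r := by abel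
        rw [this]
        refine (norm_add_le _ _).trans ?_
        have hx' : ‖x - x₀‖ ≤ 1 := by
          have := Metric.mem_ball.mp hx
          rw [dist_eq_norm] at this
          linarith
        have : ‖t • r‖ ≤ t := by
          rw [norm_smul, Real.norm_eq_abs, abs_of_pos ht]
          nlinarith [norm_nonneg r]
        linarith
      calc ‖fderiv ℝ f (x + t • r)‖
          ≤ ‖fderiv ℝ f x₀‖ + ‖fderiv ℝ f (x + t • r) - fderiv ℝ f x₀‖ := by
            have := norm_add_le (fderiv ℝ f x₀) (fderiv ℝ f (x + t • r) - fderiv ℝ f x₀)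
            simpa using this
        _ ≤ ‖fderiv ℝ f x₀‖ + L * (1 + t) := by nlinarith
    · exact integrableOn_const hμB_fin.ne
    · refine Filter.Eventually.of_forall fun r x _ => ?_
      have h1 : HasFDerivAt (fun x : (EuclideanSpace ℝ (Fin d)) => x + t • r) (ContinuousLinearMap.id ℝ (EuclideanSpace ℝ (Fin d))) x :=
        (hasFDerivAt_id x).add_const (t • r)
      have h2 := (hdiff (x + t • r)).hasFDerivAt.comp x h1
      simpa [Function.comp_def] using h2
  -- expression of smoothedFn
  have hsf : smoothedFn t f = fun x => c • ∫ r in B, f (x + t • r) := by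
    funext x
    rw [smoothedFn, setAverage_eq]; rfl
  have hFt : ∀ x₀ : (EuclideanSpace ℝ (Fin d)), HasFDerivAt (smoothedFn t f)
      (c • ∫ r in B, fderiv ℝ f (x₀ + t • r)) x₀ := by
    intro x₀
    rw [hsf]
    exact (key x₀).const_smul c
  have hdiff_sf : Differentiable ℝ (smoothedFn t f) := fun x => (hFt x).differentiableAt
  refine ⟨hdiff_sf, fun x₀ => ?_⟩
  -- gradient of smoothedFn
  have hgrad_sf : gradient (smoothedFn t f) x₀ =
      (InnerProductSpace.toDual ℝ (EuclideanSpace ℝ (Fin d))).symm (c • ∫ r in B, fderiv ℝ f (x₀ + t • r)) :=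
    ((hFt x₀).hasGradientAt).gradient
  -- the key estimate
  have hint1 : IntegrableOn (fun r : (EuclideanSpace ℝ (Fin d)) => fderiv ℝ f (x₀ + t • r)) B volume :=
    (hfd_cont.comp (continuous_const.add (continuous_id.const_smul t))).continuousOn.integrableOn_compact hBc
  have hint2 : IntegrableOn (fun _ : (EuclideanSpace ℝ (Fin d)) => fderiv ℝ f x₀) B volume :=
    integrableOn_const (C := fderiv ℝ f x₀) hμB_fin.ne
  have hsub : (∫ r in B, (fderiv ℝ f (x₀ + t • r) - fderiv ℝ f x₀))
      = (∫ r in B, fderiv ℝ f (x₀ + t • r)) - (volume B).toReal • fderiv ℝ f x₀ := by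
    rw [integral_sub hint1 hint2, setIntegral_const]; rfl
  have hdiffexpr : c • (∫ r in B, fderiv ℝ f (x₀ + t • r)) - fderiv ℝ f x₀
      = c • ∫ r in B, (fderiv ℝ f (x₀ + t • r) - fderiv ℝ f x₀) := by
    rw [hsub, smul_sub, smul_smul, hc_mul, one_smul]
  have hnorm_int : ‖∫ r in B, (fderiv ℝ f (x₀ + t • r) - fderiv ℝ f x₀)‖
      ≤ (L * t) * (volume B).toReal := by
    refine norm_setIntegral_le_of_norm_le_const hμB_fin ?_
    intro r hr
    have hrn : ‖r‖ ≤ 1 := by simpa [hBdef] using hr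
    have h1 : ‖fderiv ℝ f (x₀ + t • r) - fderiv ℝ f x₀‖ ≤ L * ‖x₀ + t • r - x₀‖ :=
      hfd_lip _ _
    have h2 : ‖x₀ + t • r - x₀‖ ≤ t := by
      have : x₀ + t • r - x₀ = t • r := by abel
      rw [this, norm_smul, Real.norm_eq_abs, abs_of_pos ht]
      nlinarith [norm_nonneg r]
    nlinarith
  have hdist : ‖gradient (smoothedFn t f) x₀ - gradient f x₀‖ ≤ L * t := by
    have hgf : gradient f x₀ =
        (InnerProductSpace.toDual ℝ (EuclideanSpace ℝ (Fin d))).symm (fderiv ℝ f x₀) := rfl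
    rw [hgrad_sf, hgf, ← map_sub, LinearIsometryEquiv.norm_map, hdiffexpr, norm_smul,
      Real.norm_eq_abs, abs_of_pos hc_pos]
    calc c * ‖∫ r in B, (fderiv ℝ f (x₀ + t • r) - fderiv ℝ f x₀)‖
        ≤ c * ((L * t) * (volume B).toReal) := by
          exact mul_le_mul_of_nonneg_left hnorm_int hc_pos.le
      _ = (L * t) * (c * (volume B).toReal) := by ring
      _ = L * t := by rw [hc_mul, mul_one]
  -- conclude by triangle inequality and algebra
  have htri : ‖gradient f x₀‖ ≤ ‖gradient (smoothedFn t f) x₀‖ + L * t := by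
    calc ‖gradient f x₀‖
        ≤ ‖gradient (smoothedFn t f) x₀‖
          + ‖gradient (smoothedFn t f) x₀ - gradient f x₀‖ := by
          have := norm_sub_le (gradient (smoothedFn t f) x₀)
            (gradient (smoothedFn t f) x₀ - gradient f x₀)
          simpa using this
      _ ≤ ‖gradient (smoothedFn t f) x₀‖ + L * t := by linarith
  have ha := norm_nonneg (gradient (smoothedFn t f) x₀)
  have hb := norm_nonneg (gradient f x₀)
  nlinarith [sq_nonneg (‖gradient (smoothedFn t f) x₀‖ - L * t)]
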